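/- Suppose ‖b_u‖ ≤ C₁ for all u ∈ T and Φ : T → ℂ is measurable. If the integral ∫_T Φ(u) f(V_u x + b_u) dμ(u) converges absolutely at some point x for the function f(y) = e^{−‖y‖²}, then Φ ∈ L¹(μ). In particular, the condition Φ ∈ L¹(μ) is necessary for the Hausdorff operator with kernel Φ and isometries A(u)(x) = V_u x + b_u with uniformly bounded translations to be well-defined on W^{1,p}(ℝⁿ). -/
import Mathlib


open MeasureTheory ENNReal Matrix

lemma norm_toEuclideanLin_of_orthogonal {n : ℕ} (A : Matrix (Fin n) (Fin n) ℝ)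
    (h : Aᵀ * A = 1) (x : EuclideanSpace ℝ (Fin n)) :
    ‖Matrix.toEuclideanLin A x‖ = ‖x‖ := by
  have key : Matrix.toEuclideanLin Aᵀ (Matrix.toEuclideanLin A x) = x := by
    simp [Matrix.toEuclideanLin_apply, Matrix.mulVec_mulVec, h]
  have hsq : ‖Matrix.toEuclideanLin A x‖ ^ 2 = ‖x‖ ^ 2 := by
    rw [← real_inner_self_eq_norm_sq, ← real_inner_self_eq_norm_sq]
    have := LinearMap.adjoint_inner_left (𝕜 := ℝ) (Matrix.toEuclideanLin A)
      x (Matrix.toEuclideanLin A x)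
    rw [← Matrix.toEuclideanLin_conjTranspose_eq_adjoint] at this
    simp only [Matrix.conjTranspose_eq_transpose_of_trivial] at this
    rw [key] at this
    rw [real_inner_comm] at this
    exact this.symm
  nlinarith [norm_nonneg (Matrix.toEuclideanLin A x), norm_nonneg x]

/-- If `‖b_u‖ ≤ C₁` for all `u ∈ T` and the integral `∫_T Φ(u) f(V_u x + b_u) dμ(u)`
converges absolutely at some point `x` for the Gaussian `f y = exp (−‖y‖²)`, then
`Φ ∈ L¹(μ)`.  Hence the condition `Φ ∈ L¹(μ)` is necessary for the Hausdorff operator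
with uniformly bounded translations to be well defined on `W^{1,p}(ℝⁿ)`. -/
theorem integrable_of_gaussian_hausdorff_converges (n : ℕ)
    {T : Type*} [MeasurableSpace T] (μ : Measure T)
    (Φ : T → ℂ) (hΦm : AEStronglyMeasurable Φ μ)
    (V : T → Matrix (Fin n) (Fin n) ℝ) (b : T → EuclideanSpace ℝ (Fin n))
    (hV : ∀ u, (V u)ᵀ * V u = 1)
    (C₁ : ℝ) (hb : ∀ u, ‖b u‖ ≤ C₁)
    (x : EuclideanSpace ℝ (Fin n))
    (habs : Integrable
      (fun u => ‖Φ u‖ * Real.exp (-‖Matrix.toEuclideanLin (V u) x + b u‖ ^ 2)) μ) :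
    Integrable Φ μ := by
  set c : ℝ := ‖x‖ + |C₁| with hc
  have hcn : 0 ≤ c := by positivity
  refine Integrable.mono' (habs.const_mul (Real.exp (c ^ 2))) hΦm ?_
  filter_upwards with u
  have hle : ‖Matrix.toEuclideanLin (V u) x + b u‖ ≤ c := by
    calc ‖Matrix.toEuclideanLin (V u) x + b u‖
        ≤ ‖Matrix.toEuclideanLin (V u) x‖ + ‖b u‖ := norm_add_le _ _
      _ ≤ ‖x‖ + |C₁| := by
          rw [norm_toEuclideanLin_of_orthogonal (V u) (hV u)]
          exact add_le_add le_rfl ((hb u).trans (le_abs_self C₁))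
  have hsq : ‖Matrix.toEuclideanLin (V u) x + b u‖ ^ 2 ≤ c ^ 2 :=
    pow_le_pow_left₀ (norm_nonneg _) hle 2
  have hexp : Real.exp (-c ^ 2) ≤
      Real.exp (-‖Matrix.toEuclideanLin (V u) x + b u‖ ^ 2) :=
    Real.exp_le_exp.mpr (by linarith)
  have hone : (1:ℝ) ≤ Real.exp (c ^ 2) *
      Real.exp (-‖Matrix.toEuclideanLin (V u) x + b u‖ ^ 2) := by
    rw [← Real.exp_add]
    exact Real.one_le_exp (by linarith)
  nlinarith [norm_nonneg (Φ u), mul_le_mul_of_nonneg_left hone (norm_nonneg (Φ u))]
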